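/- Let x : [t₀,∞) → ℝ^K solve x' = Ax with x(t₀) = x₀. Then ‖x(t)‖ ≤ e^{(t−t₀)μ(A)} ‖x₀‖ for all t ≥ t₀, where μ is the logarithmic norm associated to the given induced norm. -/

import Mathlib

open Filter Set Asymptotics Real

lemma slope_aux {E : Type*} [NormedAddCommGroup E] [NormedSpace ℂ E]
    (A : E →L[ℂ] E) (x : ℝ → E) (t : ℝ) (hx : HasDerivAt x (A (x t)) t) (μ : ℝ)
    (hμ : Tendsto (fun h : ℝ => (‖(1 : E →L[ℂ] E) + h • A‖ - 1) / h)
      (nhdsWithin 0 (Set.Ioi 0)) (nhds μ))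
    {r : ℝ} (hr : μ * ‖x t‖ < r) :
    ∀ᶠ z in nhdsWithin t (Set.Ioi t), (z - t)⁻¹ * (‖x z‖ - ‖x t‖) < r := by
  have hlo : (fun z => ‖x z - x t - (z - t) • A (x t)‖) =o[nhds t] fun z => z - t :=
    (hasDerivAt_iff_isLittleO.mp hx).norm_left
  have h1 : Tendsto (fun z => ‖x z - x t - (z - t) • A (x t)‖ / (z - t))
      (nhdsWithin t (Set.Ioi t)) (nhds 0) :=
    hlo.tendsto_div_nhds_zero.mono_left nhdsWithin_le_nhds
  have hsub : Tendsto (fun z => z - t) (nhdsWithin t (Set.Ioi t))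
      (nhdsWithin 0 (Set.Ioi 0)) := by
    refine tendsto_nhdsWithin_iff.mpr ⟨?_, ?_⟩
    · have := ((continuous_sub_right t).tendsto t).mono_left (nhdsWithin_le_nhds
        (s := Set.Ioi t))
      simpa using this
    · filter_upwards [eventually_mem_nhdsWithin] with z hz
      exact sub_pos.mpr (mem_Ioi.mp hz)
  have h2 : Tendsto (fun z => (‖(1 : E →L[ℂ] E) + (z - t) • A‖ - 1) / (z - t))
      (nhdsWithin t (Set.Ioi t)) (nhds μ) := hμ.comp hsub
  have htot : Tendsto (fun z => ‖x z - x t - (z - t) • A (x t)‖ / (z - t)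
      + ((‖(1 : E →L[ℂ] E) + (z - t) • A‖ - 1) / (z - t)) * ‖x t‖)
      (nhdsWithin t (Set.Ioi t)) (nhds (μ * ‖x t‖)) := by
    have := h1.add (h2.mul_const ‖x t‖)
    simpa using this
  filter_upwards [htot.eventually_lt_const hr, eventually_mem_nhdsWithin] with z hz hzt
  refine lt_of_le_of_lt ?_ hz
  have hpos : (0 : ℝ) < z - t := sub_pos.mpr hzt
  have key : ‖x z‖ - ‖x t‖ ≤ ‖x z - x t - (z - t) • A (x t)‖
      + (‖(1 : E →L[ℂ] E) + (z - t) • A‖ - 1) * ‖x t‖ := by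
    have heq : (((1 : E →L[ℂ] E) + (z - t) • A) : E →L[ℂ] E) (x t)
        = x t + (z - t) • A (x t) := by
      simp [ContinuousLinearMap.add_apply]
    have h3 : ‖x z‖ ≤ ‖x z - x t - (z - t) • A (x t)‖ + ‖x t + (z - t) • A (x t)‖ := by
      have := norm_add_le (x z - x t - (z - t) • A (x t)) (x t + (z - t) • A (x t))
      simpa using this
    have h4 : ‖x t + (z - t) • A (x t)‖ ≤ ‖(1 : E →L[ℂ] E) + (z - t) • A‖ * ‖x t‖ := by
      rw [← heq]; exact ContinuousLinearMap.le_opNorm _ _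
    nlinarith [norm_nonneg (x t)]
  calc (z - t)⁻¹ * (‖x z‖ - ‖x t‖)
      ≤ (z - t)⁻¹ * (‖x z - x t - (z - t) • A (x t)‖
        + (‖(1 : E →L[ℂ] E) + (z - t) • A‖ - 1) * ‖x t‖) := by
        exact mul_le_mul_of_nonneg_left key (inv_nonneg.mpr hpos.le)
    _ = ‖x z - x t - (z - t) • A (x t)‖ / (z - t)
        + ((‖(1 : E →L[ℂ] E) + (z - t) • A‖ - 1) / (z - t)) * ‖x t‖ := by
        field_simp

/-- If `x : ℝ → E` solves `x' = A x` with `x t₀ = x₀`, then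
`‖x t‖ ≤ exp ((t - t₀) * μ(A)) * ‖x₀‖` for all `t ≥ t₀`, where `μ(A)` is the logarithmic
norm associated to the induced operator norm. -/
theorem stmt_10 {E : Type*} [NormedAddCommGroup E] [NormedSpace ℂ E] [CompleteSpace E]
    (A : E →L[ℂ] E) (t₀ : ℝ) (x₀ : E) (x : ℝ → E)
    (hx : ∀ t : ℝ, HasDerivAt x (A (x t)) t) (hx₀ : x t₀ = x₀) (μ : ℝ)
    (hμ : Filter.Tendsto (fun h : ℝ => (‖(1 : E →L[ℂ] E) + h • A‖ - 1) / h)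
      (nhdsWithin 0 (Set.Ioi 0)) (nhds μ)) :
    ∀ t : ℝ, t₀ ≤ t → ‖x t‖ ≤ Real.exp ((t - t₀) * μ) * ‖x₀‖ := by
  intro t ht
  have hxc : Continuous x := by
    exact continuous_iff_continuousAt.mpr fun z => (hx z).continuousAt
  have := le_gronwallBound_of_liminf_deriv_right_le (f := fun z => ‖x z‖)
    (f' := fun z => μ * ‖x z‖) (δ := ‖x₀‖) (K := μ) (ε := 0) (a := t₀) (b := t)
    (hxc.norm.continuousOn)
    (fun z _ r hr => (slope_aux A x z (hx z) μ hμ hr).frequently)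
    (by show ‖x t₀‖ ≤ ‖x₀‖; rw [hx₀]) (fun z _ => by simp) t (right_mem_Icc.mpr ht)
  rwa [gronwallBound_ε0, mul_comm ‖x₀‖, mul_comm μ] at this
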